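/- arXiv:2008.13291 — 2 statements merged into one kernel-verified Lean document; each statement's English description precedes it below -/
import Mathlib

section
/- Let f : ℝⁿ → ℝ be ω-strongly convex with gradient ∇f, L a graph Laplacian of a connected undirected graph with second eigenvalue λ₂ > 0, and p⋆ the minimizer of f subject to 𝟙ᵀp = c. If 𝟙ᵀp = c and p⁺ = p − ηL∇f(p), then λ₂ω‖p − p⋆‖ ≤ ‖L∇f(p)‖ = (1/η)‖p⁺ − p‖. Consequently, if each coordinate satisfies |pᵢ⁺ − pᵢ| ≤ Δηλ₂ω/√n, then ‖p − p⋆‖ ≤ Δ. -/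
open scoped RealInnerProductSpace

/-- The all-ones vector in `ℝⁿ`. -/
noncomputable def onesVec (n : ℕ) : EuclideanSpace ℝ (Fin n) := WithLp.toLp 2 (fun _ => 1)

/-- Auxiliary: removing the component along a vector `u` orthogonal to `v` does not
change the inner product with `v`. -/
lemma inner_proj_aux {n : ℕ} (x u v : EuclideanSpace ℝ (Fin n)) (β : ℝ)
    (hv : ⟪u, v⟫ = 0) : ⟪x - β • u, v⟫ = ⟪x, v⟫ := by
  rw [inner_sub_left, real_inner_smul_left, hv]; ring

/-- Locally checkable stopping criterion: `λ₂ω‖p - p⋆‖ ≤ ‖L∇f(p)‖ = (1/η)‖p⁺ - p‖`, and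
if each coordinate update is at most `Δηλ₂ω/√n` then `‖p - p⋆‖ ≤ Δ`. -/
theorem stopping_criterion {n : ℕ} (f : EuclideanSpace ℝ (Fin n) → ℝ)
    (L : EuclideanSpace ℝ (Fin n) →L[ℝ] EuclideanSpace ℝ (Fin n))
    (ω lam2 η c Δ : ℝ) (hω : 0 < ω) (hlam2 : 0 < lam2) (hη : 0 < η) (hΔ : 0 < Δ)
    (hstrong : ∀ p q, ω * ‖p - q‖^2 ≤ ⟪gradient f p - gradient f q, p - q⟫)
    (hsym : ∀ x y, ⟪L x, y⟫ = ⟪x, L y⟫)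
    (hker : L (onesVec n) = 0)
    (hgap : ∀ v : EuclideanSpace ℝ (Fin n),
      ⟪v, onesVec n⟫ = 0 → lam2 * ‖v‖ ≤ ‖L v‖)
    (pstar : EuclideanSpace ℝ (Fin n))
    (hstar_feas : ⟪onesVec n, pstar⟫ = c)
    (hstar_min : ∀ q, ⟪onesVec n, q⟫ = c → f pstar ≤ f q)
    (p : EuclideanSpace ℝ (Fin n))
    (hp_feas : ⟪onesVec n, p⟫ = c) :
    lam2 * ω * ‖p - pstar‖ ≤ ‖L (gradient f p)‖ ∧
    ‖L (gradient f p)‖ = (1/η) * ‖(p - η • L (gradient f p)) - p‖ ∧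
    ((∀ i : Fin n, |(p - η • L (gradient f p)) i - p i| ≤ Δ * η * lam2 * ω / Real.sqrt n) →
      ‖p - pstar‖ ≤ Δ) := by
  classical
  have hone_inner : ∀ x : EuclideanSpace ℝ (Fin n), ⟪onesVec n, x⟫ = ∑ i, x i := by
    intro x
    simp [onesVec, PiLp.inner_apply, RCLike.inner_apply]
  have hone_one : ⟪onesVec n, onesVec n⟫ = (n : ℝ) := by
    rw [hone_inner]; simp [onesVec]
  -- generic: subtracting the mean makes a vector orthogonal to the ones vector
  have hmean : ∀ x : EuclideanSpace ℝ (Fin n),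
      ⟪onesVec n, x - (⟪onesVec n, x⟫ / n) • onesVec n⟫ = 0 := by
    intro x
    rw [inner_sub_right, inner_smul_right, hone_one]
    by_cases hn : (n : ℝ) = 0
    · have h0 : n = 0 := by exact_mod_cast hn
      subst h0
      simp [hone_inner]
    · rw [div_mul_cancel₀ _ hn, sub_self]
  -- Step A: directional derivative of f at pstar vanishes in directions ⊥ 𝟙
  have hperp : ∀ w : EuclideanSpace ℝ (Fin n), ⟪onesVec n, w⟫ = 0 →
      ⟪gradient f pstar, w⟫ = 0 := by
    intro w hw
    by_cases hd : DifferentiableAt ℝ f pstar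
    · have hgrad := hd.hasGradientAt
      have hφ : HasDerivAt (fun t : ℝ => pstar + t • w) w 0 := by
        simpa using ((hasDerivAt_id (0:ℝ)).smul_const w).const_add pstar
      have hfd : HasFDerivAt f (InnerProductSpace.toDual ℝ _ (gradient f pstar))
          ((fun t : ℝ => pstar + t • w) 0) := by
        simpa using hgrad.hasFDerivAt
      have hcomp : HasDerivAt (fun t : ℝ => f (pstar + t • w)) ⟪gradient f pstar, w⟫ 0 := by
        have := hfd.comp_hasDerivAt (0:ℝ) hφ
        simpa [InnerProductSpace.toDual_apply_apply, Function.comp_def] using this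
      have hmin : IsLocalMin (fun t : ℝ => f (pstar + t • w)) 0 := by
        apply Filter.Eventually.of_forall
        intro t
        have hfeas : ⟪onesVec n, pstar + t • w⟫ = c := by
          rw [inner_add_right, inner_smul_right, hw, hstar_feas]; ring
        simpa using hstar_min _ hfeas
      exact hmin.hasDerivAt_eq_zero hcomp
    · rw [gradient_eq_zero_of_not_differentiableAt hd]
      simp
  -- The gradient at pstar is a multiple of the ones vector, hence L (∇f p⋆) = 0
  have hLgs : L (gradient f pstar) = 0 := by
    have hw1 := hmean (gradient f pstar)
    have h1 : ⟪gradient f pstar,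
        gradient f pstar - (⟪onesVec n, gradient f pstar⟫ / n) • onesVec n⟫ = 0 :=
      hperp _ hw1
    have h2 : ⟪gradient f pstar - (⟪onesVec n, gradient f pstar⟫ / n) • onesVec n,
        gradient f pstar - (⟪onesVec n, gradient f pstar⟫ / n) • onesVec n⟫ = 0 := by
      rw [inner_sub_left, real_inner_smul_left, h1, hw1]; ring
    have h3 : gradient f pstar - (⟪onesVec n, gradient f pstar⟫ / n) • onesVec n = 0 :=
      inner_self_eq_zero.mp h2
    have h4 : gradient f pstar = (⟪onesVec n, gradient f pstar⟫ / n) • onesVec n :=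
      sub_eq_zero.mp h3
    rw [h4, map_smul, hker, smul_zero]
  -- feasibility of the difference vector
  have hv1 : ⟪onesVec n, p - pstar⟫ = 0 := by
    rw [inner_sub_right, hp_feas, hstar_feas, sub_self]
  -- Step B: main inequality
  have hmain : lam2 * ω * ‖p - pstar‖ ≤ ‖L (gradient f p)‖ := by
    set G := gradient f p - gradient f pstar with hG
    set β := ⟪onesVec n, G⟫ / n with hβ
    have hGp1 : ⟪onesVec n, G - β • onesVec n⟫ = 0 := hmean G
    have hLG : L (G - β • onesVec n) = L (gradient f p) := by
      rw [map_sub, map_smul, hker, smul_zero, sub_zero, hG, map_sub, hLgs, sub_zero]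
    have hgapG : lam2 * ‖G - β • onesVec n‖ ≤ ‖L (gradient f p)‖ := by
      rw [← hLG]
      exact hgap _ (by rw [real_inner_comm]; exact hGp1)
    have hsc : ω * ‖p - pstar‖^2 ≤ ⟪G, p - pstar⟫ := hstrong p pstar
    have hGv : ⟪G - β • onesVec n, p - pstar⟫ = ⟪G, p - pstar⟫ :=
      inner_proj_aux G (onesVec n) (p - pstar) β hv1
    have hcs : ⟪G - β • onesVec n, p - pstar⟫ ≤ ‖G - β • onesVec n‖ * ‖p - pstar‖ :=
      real_inner_le_norm _ _
    have key : ω * ‖p - pstar‖^2 ≤ ‖G - β • onesVec n‖ * ‖p - pstar‖ := by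
      rw [← hGv] at hsc
      linarith
    rcases eq_or_lt_of_le (norm_nonneg (p - pstar)) with h0 | h0
    · rw [← h0, mul_zero]
      exact norm_nonneg _
    · have hωv : ω * ‖p - pstar‖ ≤ ‖G - β • onesVec n‖ := by
        rw [sq] at key
        nlinarith
      calc lam2 * ω * ‖p - pstar‖ = lam2 * (ω * ‖p - pstar‖) := by ring
        _ ≤ lam2 * ‖G - β • onesVec n‖ := by nlinarith
        _ ≤ ‖L (gradient f p)‖ := hgapG
  have heq : ‖L (gradient f p)‖ =
      (1/η) * ‖(p - η • L (gradient f p)) - p‖ := by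
    have h : (p - η • L (gradient f p)) - p = -(η • L (gradient f p)) := by abel
    rw [h, norm_neg, norm_smul, Real.norm_eq_abs, abs_of_pos hη]
    field_simp
  refine ⟨hmain, heq, ?_⟩
  intro hcoord
  by_cases hn : n = 0
  · subst hn
    have hv0 : p - pstar = (0 : EuclideanSpace ℝ (Fin 0)) := by
      ext i
      exact i.elim0
    rw [hv0, norm_zero]
    exact hΔ.le
  have hn1 : (1:ℝ) ≤ (n:ℝ) := by exact_mod_cast Nat.one_le_iff_ne_zero.mpr hn
  have hsn : 0 < Real.sqrt n := Real.sqrt_pos.mpr (by linarith)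
  have hMpos : 0 < Δ * η * lam2 * ω / Real.sqrt n := by positivity
  -- bound the norm of the update
  have hupd : ‖(p - η • L (gradient f p)) - p‖ ≤
      Real.sqrt n * (Δ * η * lam2 * ω / Real.sqrt n) := by
    rw [EuclideanSpace.norm_eq]
    have hsum : (∑ i, ‖((p - η • L (gradient f p)) - p) i‖^2) ≤
        (n : ℝ) * (Δ * η * lam2 * ω / Real.sqrt n)^2 := by
      calc (∑ i, ‖((p - η • L (gradient f p)) - p) i‖^2)
          ≤ ∑ _i : Fin n, (Δ * η * lam2 * ω / Real.sqrt n)^2 := by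
            apply Finset.sum_le_sum
            intro i _
            have h1 : ((p - η • L (gradient f p)) - p) i =
                (p - η • L (gradient f p)) i - p i := rfl
            rw [Real.norm_eq_abs, h1]
            exact pow_le_pow_left₀ (abs_nonneg _) (hcoord i) 2
        _ = (n : ℝ) * (Δ * η * lam2 * ω / Real.sqrt n)^2 := by
            simp [mul_comm]
    calc Real.sqrt (∑ i, ‖((p - η • L (gradient f p)) - p) i‖^2)
        ≤ Real.sqrt ((n:ℝ) * (Δ * η * lam2 * ω / Real.sqrt n)^2) :=
          Real.sqrt_le_sqrt hsum
      _ = Real.sqrt n * (Δ * η * lam2 * ω / Real.sqrt n) := by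
          rw [Real.sqrt_mul (by positivity), Real.sqrt_sq hMpos.le]
  have hLgM : ‖L (gradient f p)‖ ≤ Δ * lam2 * ω := by
    have h2 : ‖(p - η • L (gradient f p)) - p‖ = η * ‖L (gradient f p)‖ := by
      have h : (p - η • L (gradient f p)) - p = -(η • L (gradient f p)) := by abel
      rw [h, norm_neg, norm_smul, Real.norm_eq_abs, abs_of_pos hη]
    rw [h2] at hupd
    have h3 : Real.sqrt n * (Δ * η * lam2 * ω / Real.sqrt n) = Δ * η * lam2 * ω := by
      field_simp
    rw [h3] at hupd
    have h7 : η * ‖L (gradient f p)‖ ≤ η * (Δ * lam2 * ω) := by linarith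
    exact le_of_mul_le_mul_left h7 hη
  have h5 : lam2 * ω * ‖p - pstar‖ ≤ lam2 * ω * Δ := by
    have h6 := hmain.trans hLgM
    linarith
  exact le_of_mul_le_mul_left h5 (mul_pos hlam2 hω)
end

section
/- Suppose the subsolver output x¹ satisfies m(x¹) − m(x⁰) < −cε‖x¹ − x⁰‖ − c√(ρε)‖x¹ − x⁰‖², and the gradient/Hessian estimates satisfy ‖g − ∇F̄(x⁰)‖ ≤ c̄ε + ψ_g Δ and ‖(H − ∇²F̄(x⁰))v‖ ≤ (c̄√(ρε) + ψ_H Δ)‖v‖, with c̄ε + ψ_g Δ ≤ cε and c̄√(ρε) + ψ_H Δ ≤ c√(ρε). Then F̄(x¹) < F̄(x⁰) whenever x¹ ≠ x⁰, using the descent bound F̄(x¹) − F̄(x⁰) ≤ m(x¹) − m(x⁰) + ‖g − ∇F̄(x⁰)‖·‖x¹−x⁰‖ + (1/2)‖(H − ∇²F̄(x⁰))‖·‖x¹−x⁰‖² (a factor-of-2 slack is absorbed into the constants). -/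
open scoped RealInnerProductSpace

theorem taylor2_bound {d : ℕ} (F : EuclideanSpace ℝ (Fin d) → ℝ) (ρ : ℝ)
    (hρ : 0 ≤ ρ) (hF : ContDiff ℝ 2 F)
    (hLip : ∀ x y, ‖fderiv ℝ (gradient F) x - fderiv ℝ (gradient F) y‖ ≤ ρ * ‖x - y‖)
    (x0 x1 : EuclideanSpace ℝ (Fin d)) :
    F x1 ≤ F x0 + ⟪x1 - x0, gradient F x0⟫
      + (1/2) * ⟪x1 - x0, (fderiv ℝ (gradient F) x0) (x1 - x0)⟫
      + (ρ/6) * ‖x1 - x0‖^3 := by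
  set s := x1 - x0 with hs
  set γ : ℝ → EuclideanSpace ℝ (Fin d) := fun t => x0 + t • s with hγdef
  have hγ : ∀ t : ℝ, HasDerivAt γ s t := by
    intro t
    have h := ((hasDerivAt_id t).smul_const s).const_add x0
    rw [one_smul] at h
    exact h
  have hγc : Continuous γ := by fun_prop
  have hFd : Differentiable ℝ F := hF.differentiable (by norm_num)
  have hG1 : ContDiff ℝ 1 (gradient F) := by
    have h1 : ContDiff ℝ 1 (fderiv ℝ F) := hF.fderiv_right (by norm_num)
    exact (InnerProductSpace.toDual ℝ _).symm.contDiff.comp h1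
  have hGd : Differentiable ℝ (gradient F) := hG1.differentiable one_ne_zero
  have hAc : Continuous (fderiv ℝ (gradient F)) :=
    (hG1.fderiv_right (m := 0) (by norm_num)).continuous
  set u : ℝ → ℝ := fun t => ⟪s, gradient F (γ t)⟫ with hu_def
  set w : ℝ → ℝ := fun t => ⟪s, (fderiv ℝ (gradient F) (γ t)) s⟫ with hw_def
  have hu : ∀ t : ℝ, HasDerivAt (fun t => F (γ t)) (u t) t := by
    intro t
    have h1 := (hFd (γ t)).hasFDerivAt.comp_hasDerivAt t (hγ t)
    have h2 : fderiv ℝ F (γ t) s = ⟪gradient F (γ t), s⟫ := by simp [gradient]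
    rw [h2, real_inner_comm] at h1
    exact h1
  have hw : ∀ t : ℝ, HasDerivAt u (w t) t := by
    intro t
    have h1 : HasDerivAt (fun t => gradient F (γ t))
        ((fderiv ℝ (gradient F) (γ t)) s) t :=
      (hGd (γ t)).hasFDerivAt.comp_hasDerivAt t (hγ t)
    exact (innerSL ℝ s).hasFDerivAt.comp_hasDerivAt t h1
  have hwc : Continuous w := by
    apply continuous_const.inner
    exact ((hAc.comp hγc).clm_apply continuous_const)
  set ψ : ℝ → ℝ := fun t => F (γ t) + (1 - t) * u t with hψ_def
  have hψ : ∀ t : ℝ, HasDerivAt ψ ((1 - t) * w t) t := by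
    intro t
    have hprod : HasDerivAt (fun t : ℝ => (1 - t) * u t)
        ((-1) * u t + (1 - t) * w t) t :=
      (((hasDerivAt_id t).const_sub 1)).mul (hw t)
    have h : HasDerivAt ψ (u t + (-1 * u t + (1 - t) * w t)) t := (hu t).add hprod
    convert h using 1
    ring
  have hFTC : ψ 1 - ψ 0 = ∫ t in (0:ℝ)..1, (1 - t) * w t := by
    refine (intervalIntegral.integral_eq_sub_of_hasDerivAt (fun t _ => hψ t) ?_).symm
    exact ((continuous_const.sub continuous_id).mul hwc).intervalIntegrable 0 1
  have hγ0 : γ 0 = x0 := by simp [hγdef]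
  have hγ1 : γ 1 = x1 := by simp [hγdef, hs]
  have hψ1 : ψ 1 = F x1 := by simp [hψ_def, hγ1]
  have hψ0 : ψ 0 = F x0 + u 0 := by simp [hψ_def, hγ0]
  -- bound the integral
  have hbound : ∀ t ∈ Set.Icc (0:ℝ) 1,
      (1 - t) * w t ≤ (1 - t) * w 0 + (1 - t) * (t * (ρ * ‖s‖^3)) := by
    intro t ht
    have h1 : w t - w 0 ≤ t * (ρ * ‖s‖^3) := by
      have : w t - w 0 = ⟪s, ((fderiv ℝ (gradient F) (γ t)
          - fderiv ℝ (gradient F) (γ 0)) s)⟫ := by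
        simp [hw_def, inner_sub_right]
      rw [this]
      calc ⟪s, ((fderiv ℝ (gradient F) (γ t) - fderiv ℝ (gradient F) (γ 0)) s)⟫
          ≤ ‖s‖ * ‖(fderiv ℝ (gradient F) (γ t) - fderiv ℝ (gradient F) (γ 0)) s‖ :=
            real_inner_le_norm _ _
        _ ≤ ‖s‖ * (‖fderiv ℝ (gradient F) (γ t) - fderiv ℝ (gradient F) (γ 0)‖ * ‖s‖) := by
            gcongr; exact ContinuousLinearMap.le_opNorm _ _
        _ ≤ ‖s‖ * ((ρ * ‖γ t - γ 0‖) * ‖s‖) := by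
            gcongr
            · exact hLip _ _
        _ = ρ * ‖γ t - γ 0‖ * ‖s‖^2 := by ring
        _ = t * (ρ * ‖s‖^3) := by
            have : γ t - γ 0 = t • s := by simp [hγdef]
            rw [this, norm_smul]
            simp [abs_of_nonneg ht.1]
            ring
    nlinarith [ht.1, ht.2, sub_nonneg.2 ht.2]
  have hint_le : (∫ t in (0:ℝ)..1, (1 - t) * w t)
      ≤ ∫ t in (0:ℝ)..1, ((1 - t) * w 0 + (1 - t) * (t * (ρ * ‖s‖^3))) := by
    apply intervalIntegral.integral_mono_on (by norm_num)
    · exact ((continuous_const.sub continuous_id).mul hwc).intervalIntegrable 0 1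
    · apply Continuous.intervalIntegrable; fun_prop
    · exact hbound
  set K := ρ * ‖s‖^3 with hK
  have hint_eval : (∫ t in (0:ℝ)..1, ((1 - t) * w 0 + (1 - t) * (t * K)))
      = (1/2) * w 0 + (ρ/6) * ‖s‖^3 := by
    have heq : ∀ t : ℝ, (1 - t) * w 0 + (1 - t) * (t * K)
        = w 0 + ((K - w 0) * t - K * t^2) := fun t => by ring
    simp_rw [heq]
    rw [intervalIntegral.integral_add (Continuous.intervalIntegrable (by fun_prop) _ _)
          (Continuous.intervalIntegrable (by fun_prop) _ _),
        intervalIntegral.integral_sub (Continuous.intervalIntegrable (by fun_prop) _ _)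
          (Continuous.intervalIntegrable (by fun_prop) _ _),
        intervalIntegral.integral_const_mul, intervalIntegral.integral_const_mul,
        integral_id, integral_pow]
    simp [hK]
    ring
  have hw0 : w 0 = ⟪s, (fderiv ℝ (gradient F) x0) s⟫ := by simp only [hw_def, hγ0]
  have hu0 : u 0 = ⟪s, gradient F x0⟫ := by simp only [hu_def, hγ0]
  have key : F x1 - (F x0 + u 0) ≤ (1/2) * w 0 + (ρ/6) * ‖s‖^3 := by
    rw [← hψ1, ← hψ0]
    rw [hFTC, ← hint_eval]
    exact hint_le
  rw [hw0, hu0] at key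
  linarith
/-- Strict decrease of the true objective under sufficient model decrease and sufficiently
accurate gradient/Hessian estimates. -/
theorem discrn_strict_decrease {d : ℕ} (F : EuclideanSpace ℝ (Fin d) → ℝ) (ρ : ℝ)
    (hρ : 0 < ρ) (hF : ContDiff ℝ 2 F)
    (hLip : ∀ x y, ‖fderiv ℝ (gradient F) x - fderiv ℝ (gradient F) y‖ ≤ ρ * ‖x - y‖)
    (x0 x1 : EuclideanSpace ℝ (Fin d)) (g : EuclideanSpace ℝ (Fin d))
    (H : EuclideanSpace ℝ (Fin d) →L[ℝ] EuclideanSpace ℝ (Fin d))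
    (hHsym : ∀ x y, ⟪H x, y⟫ = ⟪x, H y⟫)
    (c cbar ε ψg ψH Δ : ℝ)
    (hc : 0 < c) (hcbar : 0 < cbar) (hε : 0 < ε) (hψg : 0 < ψg) (hψH : 0 < ψH) (hΔ : 0 < Δ)
    (m : EuclideanSpace ℝ (Fin d) → ℝ)
    (hm : ∀ x, m x = F x0 + ⟪x - x0, g⟫ + (1/2) * ⟪x - x0, H (x - x0)⟫
      + (ρ/6) * ‖x - x0‖^3)
    (hmodel : m x1 - m x0 < -(c * ε) * ‖x1 - x0‖ - (c * Real.sqrt (ρ * ε)) * ‖x1 - x0‖^2)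
    (hg : ‖g - gradient F x0‖ ≤ cbar * ε + ψg * Δ)
    (hH : ∀ v, ‖H v - (fderiv ℝ (gradient F) x0) v‖ ≤ (cbar * Real.sqrt (ρ * ε) + ψH * Δ) * ‖v‖)
    (hacc_g : cbar * ε + ψg * Δ ≤ c * ε)
    (hacc_H : cbar * Real.sqrt (ρ * ε) + ψH * Δ ≤ c * Real.sqrt (ρ * ε))
    (hne : x1 ≠ x0) :
    F x1 < F x0 := by
  have htay := taylor2_bound F ρ hρ.le hF hLip x0 x1
  set s := x1 - x0 with hs
  set A := fderiv ℝ (gradient F) x0 with hA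
  have hm0 : m x0 = F x0 := by simp [hm x0]
  have hm1 : m x1 = F x0 + ⟪s, g⟫ + (1/2) * ⟪s, H s⟫ + (ρ/6) * ‖s‖^3 := hm x1
  have hsn : (0:ℝ) ≤ ‖s‖ := norm_nonneg s
  have e1 : ⟪s, gradient F x0⟫ - ⟪s, g⟫ ≤ (c * ε) * ‖s‖ := by
    have : ⟪s, gradient F x0⟫ - ⟪s, g⟫ = ⟪s, gradient F x0 - g⟫ := by
      rw [inner_sub_right]
    rw [this]
    calc ⟪s, gradient F x0 - g⟫ ≤ ‖s‖ * ‖gradient F x0 - g‖ := real_inner_le_norm _ _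
      _ = ‖g - gradient F x0‖ * ‖s‖ := by rw [norm_sub_rev (gradient F x0) g, mul_comm]
      _ ≤ (c * ε) * ‖s‖ := by gcongr; exact hg.trans hacc_g
  have e2 : ⟪s, A s⟫ - ⟪s, H s⟫ ≤ (c * Real.sqrt (ρ * ε)) * ‖s‖^2 := by
    have h0 : ⟪s, A s⟫ - ⟪s, H s⟫ = ⟪s, A s - H s⟫ := by rw [inner_sub_right]
    rw [h0]
    calc ⟪s, A s - H s⟫ ≤ ‖s‖ * ‖A s - H s‖ := real_inner_le_norm _ _
      _ = ‖H s - A s‖ * ‖s‖ := by rw [norm_sub_rev (A s) (H s), mul_comm]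
      _ ≤ ((cbar * Real.sqrt (ρ * ε) + ψH * Δ) * ‖s‖) * ‖s‖ := by gcongr; exact hH s
      _ ≤ ((c * Real.sqrt (ρ * ε)) * ‖s‖) * ‖s‖ := by gcongr
      _ = (c * Real.sqrt (ρ * ε)) * ‖s‖^2 := by ring
  have hcs : 0 ≤ (c * Real.sqrt (ρ * ε)) * ‖s‖^2 :=
    mul_nonneg (mul_nonneg hc.le (Real.sqrt_nonneg _)) (sq_nonneg _)
  rw [hm1, hm0] at hmodel
  linarith
end
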